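/- Let (X_n^I)_{n≥1} be a stationary process with X_n^I = (X_{n,i}, i ∈ I) such that for every finite J ⊂ I, every j ∈ J and every n ≥ 0, (X_{1:n}^J, X_{n+1}^{J\{j}}, X_{n+1,j}) has the same distribution as (X_{1:n}^J, X_{n+1}^{J\{j}}, X_{n+2,j}). Then the array [X_{n,i}] is partially exchangeable. -/

import Mathlib

open MeasureTheory ProbabilityTheory Filter
open scoped ENNReal NNReal Topology

namespace StationaryPcid

variable {Ω : Type*} {mΩ : MeasurableSpace Ω}

lemma measurable_comap' {β γ : Type*} [mβ : MeasurableSpace β] [MeasurableSpace γ]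
    (T : Ω → β) {g : β → γ} (hg : Measurable g) :
    Measurable[mβ.comap T] (fun ω => g (T ω)) := fun s hs => ⟨g ⁻¹' s, hg hs, rfl⟩

lemma comap_le_comap {β γ : Type*} [mβ : MeasurableSpace β] [mγ : MeasurableSpace γ]
    {f : Ω → β} {g : Ω → γ} (ρ : γ → β) (hρ : Measurable ρ) (h : ∀ ω, f ω = ρ (g ω)) :
    mβ.comap f ≤ mγ.comap g := by
  have hfg : f = ρ ∘ g := funext h
  rw [hfg, ← MeasurableSpace.comap_comp]
  exact MeasurableSpace.comap_mono hρ.comap_le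

lemma integrable_of_bdd {f : Ω → ℝ} {P : Measure Ω} [IsFiniteMeasure P] {C : ℝ}
    (hf : AEStronglyMeasurable f P) (h : ∀ᵐ ω ∂P, |f ω| ≤ C) : Integrable f P :=
  Integrable.mono' (integrable_const C) hf (by simpa [Real.norm_eq_abs] using h)

lemma integral_mul_condexp (P : Measure Ω)
    [IsProbabilityMeasure P] {m : MeasurableSpace Ω} (hm : m ≤ mΩ) {W h : Ω → ℝ} (hW : StronglyMeasurable[m] W)
    (hWb : ∀ᵐ ω ∂P, |W ω| ≤ 1) (hh : Integrable h P) :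
    ∫ ω, W ω * (P[h|m]) ω ∂P = ∫ ω, W ω * h ω ∂P := by
  have hW' : StronglyMeasurable[mΩ] W := hW.mono hm
  have hWae : AEStronglyMeasurable[mΩ] W P := hW'.aestronglyMeasurable
  have hWh : Integrable (W * h) P := hh.bdd_mul hWae (by simpa [Real.norm_eq_abs] using hWb)
  have h1 : P[W * h|m] =ᵐ[P] W * P[h|m] := condExp_mul_of_stronglyMeasurable_left hW hWh hh
  have h2 : ∫ ω, (P[W * h|m]) ω ∂P = ∫ ω, (W * h) ω ∂P := integral_condExp hm
  calc ∫ ω, W ω * (P[h|m]) ω ∂P = ∫ ω, (P[W * h|m]) ω ∂P :=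
        (integral_congr_ae h1).symm
    _ = ∫ ω, W ω * h ω ∂P := h2


variable {E I : Type*} [MeasurableSpace E]

/-- The σ-algebra of rows `0,…,n` on columns in `J₀`. -/
def Fn (X : ℕ → I → Ω → E) (J₀ : Finset I) (n : ℕ) : MeasurableSpace Ω :=
  MeasurableSpace.comap (fun ω => fun q : Fin (n+1) × J₀ => X q.1 (q.2 : I) ω) inferInstance

/-- The σ-algebra of rows `0,…,N-1` on columns in `J₀` together with row `N` off column `j`. -/
def Gn (X : ℕ → I → Ω → E) (J₀ : Finset I) (N : ℕ) (j : I) : MeasurableSpace Ω :=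
  MeasurableSpace.comap (fun ω =>
    ((fun q : Fin N × J₀ => X q.1 (q.2 : I) ω),
     (fun i : {i : I // i ∈ J₀ ∧ i ≠ j} => X N i.1 ω))) inferInstance

variable {X : ℕ → I → Ω → E} {J₀ : Finset I}

section Meas
variable (hX : ∀ n i, Measurable (X n i))
include hX

lemma measurable_FnMap (n : ℕ) :
    Measurable (fun ω => fun q : Fin (n+1) × J₀ => X q.1 (q.2 : I) ω) :=
  measurable_pi_lambda _ fun _ => hX _ _

lemma measurable_GnMap (N : ℕ) (j : I) :
    Measurable (fun ω =>
      ((fun q : Fin N × J₀ => X q.1 (q.2 : I) ω),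
       (fun i : {i : I // i ∈ J₀ ∧ i ≠ j} => X N i.1 ω))) :=
  (measurable_pi_lambda _ fun _ => hX _ _).prodMk (measurable_pi_lambda _ fun _ => hX _ _)

lemma Fn_le (n : ℕ) : Fn X J₀ n ≤ mΩ := (measurable_FnMap hX n).comap_le

lemma Gn_le (N : ℕ) (j : I) : Gn X J₀ N j ≤ mΩ := (measurable_GnMap hX N j).comap_le

end Meas

lemma Fn_mono {n m : ℕ} (h : n ≤ m) : Fn X J₀ n ≤ Fn X J₀ m :=
  comap_le_comap (fun w (q : Fin (n+1) × J₀) => w ((⟨q.1.1, by omega⟩ : Fin (m+1)), q.2))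
    (measurable_pi_lambda _ fun _ => measurable_pi_apply _) (fun _ => rfl)

lemma Gn_le_Fn (N : ℕ) (j : I) : Gn X J₀ N j ≤ Fn X J₀ N :=
  comap_le_comap
    (fun w => ((fun q : Fin N × J₀ => w ((⟨q.1.1, by omega⟩ : Fin (N+1)), q.2)),
      (fun i : {i : I // i ∈ J₀ ∧ i ≠ j} => w ((⟨N, by omega⟩ : Fin (N+1)), ⟨i.1, i.2.1⟩))))
    ((measurable_pi_lambda _ fun _ => measurable_pi_apply _).prodMk
      (measurable_pi_lambda _ fun _ => measurable_pi_apply _)) (fun _ => rfl)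

lemma Fn_le_Gn {n N : ℕ} (h : n < N) (j : I) : Fn X J₀ n ≤ Gn X J₀ N j :=
  comap_le_comap (fun w (q : Fin (n+1) × J₀) => w.1 ((⟨q.1.1, by omega⟩ : Fin N), q.2))
    (measurable_pi_lambda _ fun _ => measurable_fst.eval) (fun _ => rfl)

lemma meas_Fn_coord {n m : ℕ} (hm : m ≤ n) {i : I} (hi : i ∈ J₀) :
    Measurable[Fn X J₀ n] (X m i) :=
  measurable_comap' (fun ω => fun q : Fin (n+1) × J₀ => X q.1 (q.2 : I) ω)
    (g := fun w => w ((⟨m, by omega⟩ : Fin (n+1)), (⟨i, hi⟩ : J₀))) (measurable_pi_apply _)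

lemma meas_Gn_coord_lt {N m : ℕ} (hm : m < N) {i : I} (hi : i ∈ J₀) (j : I) :
    Measurable[Gn X J₀ N j] (X m i) :=
  measurable_comap' (fun ω =>
      ((fun q : Fin N × J₀ => X q.1 (q.2 : I) ω),
       (fun i : {i : I // i ∈ J₀ ∧ i ≠ j} => X N i.1 ω)))
    (g := fun w => w.1 ((⟨m, hm⟩ : Fin N), (⟨i, hi⟩ : J₀))) measurable_fst.eval

lemma meas_Gn_coord_eq {N : ℕ} {i j : I} (hi : i ∈ J₀) (hne : i ≠ j) :
    Measurable[Gn X J₀ N j] (X N i) :=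
  measurable_comap' (fun ω =>
      ((fun q : Fin N × J₀ => X q.1 (q.2 : I) ω),
       (fun i : {i : I // i ∈ J₀ ∧ i ≠ j} => X N i.1 ω)))
    (g := fun w => w.2 (⟨i, hi, hne⟩ : {i : I // i ∈ J₀ ∧ i ≠ j})) measurable_snd.eval



/-- The partial-cid hypothesis. -/
def PcidHyp (X : ℕ → I → Ω → E) (P : Measure Ω) : Prop :=
  ∀ (J : Finset I) (j : I), j ∈ J → ∀ n : ℕ,
    Measure.map (fun ω =>
      ((fun q : Fin n × J => X q.1 (q.2 : I) ω),
       (fun i : {i : I // i ∈ J ∧ i ≠ j} => X n i.1 ω),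
       X (n + 1) j ω)) P =
    Measure.map (fun ω =>
      ((fun q : Fin n × J => X q.1 (q.2 : I) ω),
       (fun i : {i : I // i ∈ J ∧ i ≠ j} => X n i.1 ω),
       X n j ω)) P

section Pcid
variable (P : Measure Ω) [IsProbabilityMeasure P]

/-- Key consequence of the partial cid hypothesis, in weighted-integral form. -/
lemma pcid_key (hX : ∀ n i, Measurable (X n i)) {j : I} (hj : j ∈ J₀) {f : E → ℝ} (hf : Measurable f) (hfb : ∀ x, |f x| ≤ 1)
    (N : ℕ)
    (hp : Measure.map (fun ω =>
        ((fun q : Fin N × J₀ => X q.1 (q.2 : I) ω),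
         (fun i : {i : I // i ∈ J₀ ∧ i ≠ j} => X N i.1 ω),
         X (N + 1) j ω)) P =
      Measure.map (fun ω =>
        ((fun q : Fin N × J₀ => X q.1 (q.2 : I) ω),
         (fun i : {i : I // i ∈ J₀ ∧ i ≠ j} => X N i.1 ω),
         X N j ω)) P)
    {W : Ω → ℝ} (hW : StronglyMeasurable[Gn X J₀ N j] W) (hWb : ∀ᵐ ω ∂P, |W ω| ≤ 1) :
    ∫ ω, W ω * f (X N j ω) ∂P = ∫ ω, W ω * f (X (N + 1) j ω) ∂P := by
  have hG_le : Gn X J₀ N j ≤ mΩ := Gn_le hX N j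
  have hint₀ : Integrable (fun ω => f (X N j ω)) P :=
    integrable_of_bdd ((hf.comp (hX N j)).aestronglyMeasurable)
      (Eventually.of_forall fun ω => hfb _)
  have hint₁ : Integrable (fun ω => f (X (N+1) j ω)) P :=
    integrable_of_bdd ((hf.comp (hX (N+1) j)).aestronglyMeasurable)
      (Eventually.of_forall fun ω => hfb _)
  -- set-integral equality
  have hset : ∀ B : Set Ω, MeasurableSet[Gn X J₀ N j] B →
      ∫ ω in B, f (X N j ω) ∂P = ∫ ω in B, f (X (N + 1) j ω) ∂P := by
    rintro B hB
    obtain ⟨B', hB', rfl⟩ := hB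
    set φ : ((Fin N × J₀ → E) × ({i : I // i ∈ J₀ ∧ i ≠ j} → E) × E) → ℝ :=
      fun w => Set.indicator B' (fun _ => (1:ℝ)) (w.1, w.2.1) * f w.2.2 with hφ
    have hmφ : Measurable φ :=
      ((measurable_const.indicator hB').comp
        (measurable_fst.prodMk (measurable_fst.comp measurable_snd))).mul
        (hf.comp (measurable_snd.comp measurable_snd))
    have expand : ∀ M : ℕ,
        ∫ ω in (fun ω =>
            ((fun q : Fin N × J₀ => X q.1 (q.2 : I) ω),
             (fun i : {i : I // i ∈ J₀ ∧ i ≠ j} => X N i.1 ω))) ⁻¹' B', f (X M j ω) ∂P =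
          ∫ w, φ w ∂(Measure.map (fun ω =>
            ((fun q : Fin N × J₀ => X q.1 (q.2 : I) ω),
             (fun i : {i : I // i ∈ J₀ ∧ i ≠ j} => X N i.1 ω),
             X M j ω)) P) := by
      intro M
      have hmT : Measurable (fun ω =>
          ((fun q : Fin N × J₀ => X q.1 (q.2 : I) ω),
           (fun i : {i : I // i ∈ J₀ ∧ i ≠ j} => X N i.1 ω),
           X M j ω)) :=
        (measurable_pi_lambda _ fun _ => hX _ _).prodMk
          ((measurable_pi_lambda _ fun _ => hX _ _).prodMk (hX M j))
      rw [integral_map hmT.aemeasurable hmφ.aestronglyMeasurable,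
        ← integral_indicator (hG_le _ ⟨B', hB', rfl⟩)]
      refine integral_congr_ae (Eventually.of_forall fun ω => ?_)
      by_cases h : (fun ω =>
          ((fun q : Fin N × J₀ => X q.1 (q.2 : I) ω),
           (fun i : {i : I // i ∈ J₀ ∧ i ≠ j} => X N i.1 ω))) ω ∈ B' <;>
        simp [φ, Set.indicator_apply, Set.mem_preimage, h]
    rw [expand N, expand (N+1), hp]
  -- conditional expectation equality
  haveI : SigmaFinite (P.trim hG_le) := by infer_instance
  have hce : P[(fun ω => f (X N j ω))|Gn X J₀ N j]
      =ᵐ[P] P[(fun ω => f (X (N+1) j ω))|Gn X J₀ N j] := by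
    refine ae_eq_condExp_of_forall_setIntegral_eq hG_le hint₁
      (fun s _ _ => integrable_condExp.integrableOn) (fun s hs hμs => ?_)
      stronglyMeasurable_condExp.aestronglyMeasurable 
    rw [setIntegral_condExp hG_le hint₀ hs]
    exact hset s hs
  -- conclude
  calc ∫ ω, W ω * f (X N j ω) ∂P
      = ∫ ω, W ω * (P[(fun ω => f (X N j ω))|Gn X J₀ N j]) ω ∂P :=
        (integral_mul_condexp P hG_le hW hWb hint₀).symm
    _ = ∫ ω, W ω * (P[(fun ω => f (X (N+1) j ω))|Gn X J₀ N j]) ω ∂P := by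
        refine integral_congr_ae ?_
        filter_upwards [hce] with ω hω
        rw [hω]
    _ = ∫ ω, W ω * f (X (N + 1) j ω) ∂P := integral_mul_condexp P hG_le hW hWb hint₁

/-- `N ↦ X N j` all have the same conditional law given the first `n+1` rows:
weighted-integral form. -/
lemma drop (hX : ∀ n i, Measurable (X n i))
    (hpcid : PcidHyp X P)
    {j : I} (hj : j ∈ J₀) {f : E → ℝ} (hf : Measurable f) (hfb : ∀ x, |f x| ≤ 1)
    {n : ℕ} {W : Ω → ℝ} (hW : StronglyMeasurable[Fn X J₀ n] W) (hWb : ∀ᵐ ω ∂P, |W ω| ≤ 1)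
    {N : ℕ} (hN : n < N) :
    ∫ ω, W ω * f (X N j ω) ∂P = ∫ ω, W ω * f (X (n+1) j ω) ∂P := by
  induction N, hN using Nat.le_induction with
  | base => rfl
  | succ N hN ih =>
    rw [← ih]
    exact (pcid_key P hX hj hf hfb N (hpcid J₀ j hj N)
      (hW.mono (Fn_le_Gn hN j)) hWb).symm

end Pcid

section Mart

variable (X : ℕ → I → Ω → E) (J₀ : Finset I) (P : Measure Ω)

/-- The bounded martingale of predictions of `f (X · j)`. -/
noncomputable def Mart (f : E → ℝ) (j : I) (n : ℕ) : Ω → ℝ :=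
  P[(fun ω => f (X (n+1) j ω))|Fn X J₀ n]

/-- Second moment of `Mart`. -/
noncomputable def eSq (f : E → ℝ) (j : I) (n : ℕ) : ℝ :=
  ∫ ω, (Mart X J₀ P f j n ω)^2 ∂P

/-- The error bound sequence. -/
noncomputable def eps (f : E → ℝ) (j : I) (n : ℕ) : ℝ :=
  Real.sqrt ((⨆ k, eSq X J₀ P f j k) - eSq X J₀ P f j n)

variable [IsProbabilityMeasure P]

lemma Mart_sm (f : E → ℝ) (j : I) (n : ℕ) :
    StronglyMeasurable[Fn X J₀ n] (Mart X J₀ P f j n) := stronglyMeasurable_condExp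

lemma Mart_bdd (hX : ∀ n i, Measurable (X n i)) {f : E → ℝ} (hfb : ∀ x, |f x| ≤ 1)
    (j : I) (n : ℕ) : ∀ᵐ ω ∂P, |Mart X J₀ P f j n ω| ≤ 1 := by
  have := ae_bdd_condExp_of_ae_bdd (m := Fn X J₀ n) (μ := P) (R := 1)
    (f := fun ω => f (X (n+1) j ω)) (Eventually.of_forall fun ω => by simpa using hfb _)
  simpa [Mart] using this

lemma Mart_integrable (hX : ∀ n i, Measurable (X n i)) {f : E → ℝ} (hfb : ∀ x, |f x| ≤ 1)
    (j : I) (n : ℕ) : Integrable (Mart X J₀ P f j n) P := integrable_condExp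

end Mart

section Est

variable (P : Measure Ω) [IsProbabilityMeasure P]

lemma Mart_orth (hX : ∀ n i, Measurable (X n i))
    (hpcid : PcidHyp X P)
    {j : I} (hj : j ∈ J₀) {f : E → ℝ} (hf : Measurable f) (hfb : ∀ x, |f x| ≤ 1)
    {n N : ℕ} (hnN : n ≤ N) :
    ∫ ω, Mart X J₀ P f j n ω * Mart X J₀ P f j N ω ∂P = eSq X J₀ P f j n := by
  have hMn_sm := Mart_sm X J₀ P f j n
  have hMnb := Mart_bdd X J₀ P hX hfb j n
  have hint1 : Integrable (fun ω => f (X (N+1) j ω)) P :=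
    integrable_of_bdd ((hf.comp (hX (N+1) j)).aestronglyMeasurable)
      (Eventually.of_forall fun ω => hfb _)
  have hint2 : Integrable (fun ω => f (X (n+1) j ω)) P :=
    integrable_of_bdd ((hf.comp (hX (n+1) j)).aestronglyMeasurable)
      (Eventually.of_forall fun ω => hfb _)
  have h1 : ∫ ω, Mart X J₀ P f j n ω * Mart X J₀ P f j N ω ∂P
      = ∫ ω, Mart X J₀ P f j n ω * f (X (N+1) j ω) ∂P :=
    integral_mul_condexp P (Fn_le hX N) (hMn_sm.mono (Fn_mono hnN)) hMnb hint1
  have h2 : ∫ ω, Mart X J₀ P f j n ω * f (X (N+1) j ω) ∂P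
      = ∫ ω, Mart X J₀ P f j n ω * f (X (n+1) j ω) ∂P :=
    drop P hX hpcid hj hf hfb hMn_sm hMnb (by omega : n < N+1)
  have h3 : ∫ ω, Mart X J₀ P f j n ω * f (X (n+1) j ω) ∂P
      = ∫ ω, Mart X J₀ P f j n ω * Mart X J₀ P f j n ω ∂P :=
    (integral_mul_condexp P (Fn_le hX n) hMn_sm hMnb hint2).symm
  rw [h1, h2, h3, eSq]
  simp_rw [sq]

lemma Mart_sq_integrable (hX : ∀ n i, Measurable (X n i)) {f : E → ℝ} (hfb : ∀ x, |f x| ≤ 1)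
    (j : I) (n m : ℕ) :
    Integrable (fun ω => Mart X J₀ P f j n ω * Mart X J₀ P f j m ω) P := by
  refine integrable_of_bdd (C := 1) ?_ ?_
  · exact ((((Mart_sm X J₀ P f j n).mono (Fn_le hX n)).mul
      ((Mart_sm X J₀ P f j m).mono (Fn_le hX m))).aestronglyMeasurable)
  · filter_upwards [Mart_bdd X J₀ P hX hfb j n, Mart_bdd X J₀ P hX hfb j m] with ω h1 h2
    rw [abs_mul]
    exact mul_le_one₀ h1 (abs_nonneg _) h2

lemma Mart_diff_sq (hX : ∀ n i, Measurable (X n i)) (hpcid : PcidHyp X P)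
    {j : I} (hj : j ∈ J₀) {f : E → ℝ} (hf : Measurable f) (hfb : ∀ x, |f x| ≤ 1)
    {n N : ℕ} (hnN : n ≤ N) :
    ∫ ω, (Mart X J₀ P f j N ω - Mart X J₀ P f j n ω)^2 ∂P
      = eSq X J₀ P f j N - eSq X J₀ P f j n := by
  have key : ∀ ω, (Mart X J₀ P f j N ω - Mart X J₀ P f j n ω)^2
      = Mart X J₀ P f j N ω * Mart X J₀ P f j N ω
        - 2 * (Mart X J₀ P f j n ω * Mart X J₀ P f j N ω)
        + Mart X J₀ P f j n ω * Mart X J₀ P f j n ω := fun ω => by ring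
  have iNN := Mart_sq_integrable (J₀ := J₀) P hX hfb j N N
  have inN := Mart_sq_integrable (J₀ := J₀) P hX hfb j n N
  have inn := Mart_sq_integrable (J₀ := J₀) P hX hfb j n n
  have expand : ∫ ω, (Mart X J₀ P f j N ω - Mart X J₀ P f j n ω)^2 ∂P
      = (∫ ω, Mart X J₀ P f j N ω * Mart X J₀ P f j N ω ∂P)
        - 2 * (∫ ω, Mart X J₀ P f j n ω * Mart X J₀ P f j N ω ∂P)
        + ∫ ω, Mart X J₀ P f j n ω * Mart X J₀ P f j n ω ∂P := by
    have keyfun : (fun ω => (Mart X J₀ P f j N ω - Mart X J₀ P f j n ω)^2)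
        = ((fun ω => Mart X J₀ P f j N ω * Mart X J₀ P f j N ω)
            - (fun ω => 2 * (Mart X J₀ P f j n ω * Mart X J₀ P f j N ω)))
          + (fun ω => Mart X J₀ P f j n ω * Mart X J₀ P f j n ω) := by
      funext ω
      simp only [Pi.add_apply, Pi.sub_apply]
      ring
    rw [keyfun, integral_add' (iNN.sub (inN.const_mul 2)) inn,
      integral_sub' iNN (inN.const_mul 2), integral_const_mul]
  have hN : ∫ ω, Mart X J₀ P f j N ω * Mart X J₀ P f j N ω ∂P = eSq X J₀ P f j N := by
    rw [eSq]; simp_rw [sq]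
  have hn : ∫ ω, Mart X J₀ P f j n ω * Mart X J₀ P f j n ω ∂P = eSq X J₀ P f j n := by
    rw [eSq]; simp_rw [sq]
  rw [expand, Mart_orth P hX hpcid hj hf hfb hnN, hN, hn]
  ring

lemma eSq_mono (hX : ∀ n i, Measurable (X n i)) (hpcid : PcidHyp X P)
    {j : I} (hj : j ∈ J₀) {f : E → ℝ} (hf : Measurable f) (hfb : ∀ x, |f x| ≤ 1) :
    Monotone (eSq X J₀ P f j) := by
  intro n N hnN
  have h := Mart_diff_sq P hX hpcid hj hf hfb hnN
  have h2 : 0 ≤ ∫ ω, (Mart X J₀ P f j N ω - Mart X J₀ P f j n ω)^2 ∂P :=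
    integral_nonneg fun ω => sq_nonneg _
  linarith

lemma eSq_le_one (hX : ∀ n i, Measurable (X n i)) {f : E → ℝ} (hfb : ∀ x, |f x| ≤ 1)
    (j : I) (n : ℕ) : eSq X J₀ P f j n ≤ 1 := by
  have : ∫ ω, (Mart X J₀ P f j n ω)^2 ∂P ≤ ∫ _ω, (1:ℝ) ∂P := by
    refine integral_mono_ae ?_ (integrable_const 1) ?_
    · simpa [sq] using Mart_sq_integrable P hX hfb j n n
    · filter_upwards [Mart_bdd X J₀ P hX hfb j n] with ω h
      calc (Mart X J₀ P f j n ω)^2 = |Mart X J₀ P f j n ω|^2 := (sq_abs _).symm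
        _ ≤ 1^2 := pow_le_pow_left₀ (abs_nonneg _) h 2
        _ = 1 := one_pow 2
  simpa [eSq] using this

lemma eSq_nonneg (j : I) (f : E → ℝ) (n : ℕ) : 0 ≤ eSq X J₀ P f j n :=
  integral_nonneg fun ω => sq_nonneg _

lemma Mart_L1_le_eps (hX : ∀ n i, Measurable (X n i)) (hpcid : PcidHyp X P)
    {j : I} (hj : j ∈ J₀) {f : E → ℝ} (hf : Measurable f) (hfb : ∀ x, |f x| ≤ 1)
    {n N : ℕ} (hnN : n ≤ N) :
    ∫ ω, |Mart X J₀ P f j N ω - Mart X J₀ P f j n ω| ∂P ≤ eps X J₀ P f j n := by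
  set g : Ω → ℝ := fun ω => Mart X J₀ P f j N ω - Mart X J₀ P f j n ω with hg
  have hg_sm : AEStronglyMeasurable g P :=
    ((((Mart_sm X J₀ P f j N).mono (Fn_le hX N)).sub
      ((Mart_sm X J₀ P f j n).mono (Fn_le hX n))).aestronglyMeasurable)
  have hg_bdd : ∀ᵐ ω ∂P, ‖|g ω|‖ ≤ 2 := by
    filter_upwards [Mart_bdd X J₀ P hX hfb j N, Mart_bdd X J₀ P hX hfb j n] with ω h1 h2
    rw [Real.norm_eq_abs, abs_abs, hg]
    calc |Mart X J₀ P f j N ω - Mart X J₀ P f j n ω|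
        ≤ |Mart X J₀ P f j N ω| + |Mart X J₀ P f j n ω| := abs_sub _ _
      _ ≤ 2 := by linarith
  have hg_abs_sm : AEStronglyMeasurable (fun ω => |g ω|) P := by
    simpa [Real.norm_eq_abs] using hg_sm.norm
  have hmem : MemLp (fun ω => |g ω|) 2 P :=
    MemLp.of_bound hg_abs_sm 2 hg_bdd
  have hvar : 0 ≤ ∫ ω, |g ω|^2 ∂P - (∫ ω, |g ω| ∂P)^2 := by
    have := ProbabilityTheory.variance_nonneg (fun ω => |g ω|) P
    rw [ProbabilityTheory.variance_eq_sub hmem] at this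
    simpa using this
  have habs2 : ∫ ω, |g ω|^2 ∂P = ∫ ω, g ω^2 ∂P := by simp_rw [sq_abs]
  have h1 : (∫ ω, |g ω| ∂P)^2 ≤ eSq X J₀ P f j N - eSq X J₀ P f j n := by
    rw [← Mart_diff_sq P hX hpcid hj hf hfb hnN]
    rw [habs2] at hvar
    linarith
  have h2 : ∫ ω, |g ω| ∂P ≤ Real.sqrt (eSq X J₀ P f j N - eSq X J₀ P f j n) := by
    have h3 : ∫ ω, |g ω| ∂P = Real.sqrt ((∫ ω, |g ω| ∂P)^2) :=
      (Real.sqrt_sq (integral_nonneg fun ω => abs_nonneg _)).symm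
    rw [h3]
    exact Real.sqrt_le_sqrt h1
  refine h2.trans ?_
  rw [eps]
  refine Real.sqrt_le_sqrt ?_
  have hle : eSq X J₀ P f j N ≤ ⨆ k, eSq X J₀ P f j k :=
    le_ciSup ⟨1, fun x ⟨k, hk⟩ => hk ▸ eSq_le_one P hX hfb j k⟩ N
  linarith

lemma eps_nonneg (j : I) (f : E → ℝ) (n : ℕ) : 0 ≤ eps X J₀ P f j n := Real.sqrt_nonneg _

lemma eps_tendsto (hX : ∀ n i, Measurable (X n i)) (hpcid : PcidHyp X P)
    {j : I} (hj : j ∈ J₀) {f : E → ℝ} (hf : Measurable f) (hfb : ∀ x, |f x| ≤ 1) :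
    Tendsto (eps X J₀ P f j) atTop (𝓝 0) := by
  have hmono := eSq_mono P hX hpcid hj hf hfb
  have hbdd : BddAbove (Set.range (eSq X J₀ P f j)) :=
    ⟨1, fun x ⟨k, hk⟩ => hk ▸ eSq_le_one P hX hfb j k⟩
  have h1 : Tendsto (eSq X J₀ P f j) atTop (𝓝 (⨆ k, eSq X J₀ P f j k)) :=
    tendsto_atTop_ciSup hmono hbdd
  have h2 : Tendsto (fun n => (⨆ k, eSq X J₀ P f j k) - eSq X J₀ P f j n) atTop (𝓝 0) := by
    have := (tendsto_const_nhds (x := (⨆ k, eSq X J₀ P f j k)) (f := atTop)).sub h1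
    simpa using this
  have h3 : Tendsto (fun x : ℝ => Real.sqrt x) (𝓝 0) (𝓝 0) := by
    simpa using (Real.continuous_sqrt.tendsto 0)
  exact h3.comp h2

end Est

section Stat

variable (P : Measure Ω) [IsProbabilityMeasure P]

/-- Iterated stationarity. -/
lemma shiftn (hX : ∀ n i, Measurable (X n i))
    (hstat : Measure.map (fun ω => fun p : ℕ × I => X (p.1 + 1) p.2 ω) P =
      Measure.map (fun ω => fun p : ℕ × I => X p.1 p.2 ω) P) (n : ℕ) :
    Measure.map (fun ω => fun p : ℕ × I => X (p.1 + n) p.2 ω) P =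
      Measure.map (fun ω => fun p : ℕ × I => X p.1 p.2 ω) P := by
  induction n with
  | zero => simp only [Nat.add_zero]
  | succ n ih =>
    set s₁ : ((ℕ × I) → E) → ((ℕ × I) → E) := fun y p => y (p.1 + 1, p.2) with hs₁
    have hms₁ : Measurable s₁ := measurable_pi_lambda _ fun _ => measurable_pi_apply _
    have harrn : Measurable (fun ω => fun p : ℕ × I => X (p.1 + n) p.2 ω) :=
      measurable_pi_lambda _ fun _ => hX _ _
    have harr0 : Measurable (fun ω => fun p : ℕ × I => X p.1 p.2 ω) :=
      measurable_pi_lambda _ fun _ => hX _ _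
    have hcomp : (fun ω => fun p : ℕ × I => X (p.1 + (n+1)) p.2 ω)
        = s₁ ∘ (fun ω => fun p : ℕ × I => X (p.1 + n) p.2 ω) := by
      funext ω
      funext p
      simp only [hs₁, Function.comp_apply]
      congr 1
      omega
    have hcomp0 : s₁ ∘ (fun ω => fun p : ℕ × I => X p.1 p.2 ω)
        = (fun ω => fun p : ℕ × I => X (p.1 + 1) p.2 ω) := by
      funext ω; funext p; rfl
    calc Measure.map (fun ω => fun p : ℕ × I => X (p.1 + (n+1)) p.2 ω) P
        = Measure.map s₁ (Measure.map (fun ω => fun p : ℕ × I => X (p.1 + n) p.2 ω) P) := by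
          rw [hcomp, ← Measure.map_map hms₁ harrn]
      _ = Measure.map s₁ (Measure.map (fun ω => fun p : ℕ × I => X p.1 p.2 ω) P) := by rw [ih]
      _ = Measure.map (fun ω => fun p : ℕ × I => X p.1 p.2 ω) P := by
          rw [Measure.map_map hms₁ harr0, hcomp0, hstat]

/-- Expectations of finite products are shift invariant. -/
lemma stat_prod (hX : ∀ n i, Measurable (X n i))
    (hstat : Measure.map (fun ω => fun p : ℕ × I => X (p.1 + 1) p.2 ω) P =
      Measure.map (fun ω => fun p : ℕ × I => X p.1 p.2 ω) P)
    {κ : Type*} [Fintype κ] (r : κ → ℕ) (c : κ → I) (f : κ → E → ℝ)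
    (hf : ∀ a, Measurable (f a)) (n : ℕ) :
    ∫ ω, ∏ a, f a (X (r a + n) (c a) ω) ∂P = ∫ ω, ∏ a, f a (X (r a) (c a) ω) ∂P := by
  set Φ : ((ℕ × I) → E) → ℝ := fun y => ∏ a, f a (y (r a, c a)) with hΦ
  have hmΦ : Measurable Φ :=
    Finset.measurable_prod _ fun a _ => (hf a).comp (measurable_pi_apply _)
  have harrn : Measurable (fun ω => fun p : ℕ × I => X (p.1 + n) p.2 ω) :=
    measurable_pi_lambda _ fun _ => hX _ _
  have harr0 : Measurable (fun ω => fun p : ℕ × I => X p.1 p.2 ω) :=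
    measurable_pi_lambda _ fun _ => hX _ _
  have h1 : ∫ y, Φ y ∂(Measure.map (fun ω => fun p : ℕ × I => X (p.1 + n) p.2 ω) P)
      = ∫ ω, ∏ a, f a (X (r a + n) (c a) ω) ∂P :=
    integral_map harrn.aemeasurable hmΦ.aestronglyMeasurable
  have h0 : ∫ y, Φ y ∂(Measure.map (fun ω => fun p : ℕ × I => X p.1 p.2 ω) P)
      = ∫ ω, ∏ a, f a (X (r a) (c a) ω) ∂P :=
    integral_map harr0.aemeasurable hmΦ.aestronglyMeasurable
  rw [← h1, ← h0, shiftn P hX hstat n]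

end Stat

section Main

variable (P : Measure Ω) [IsProbabilityMeasure P]

/-- The main inductive estimate: replacing the future values by their predictions at time `n`
costs at most `∑ eps`. -/
lemma main_est (hX : ∀ n i, Measurable (X n i)) (hpcid : PcidHyp X P)
    {κ : Type*} (r : κ → ℕ) (c : κ → I) (f : κ → E → ℝ)
    (hf : ∀ a, Measurable (f a)) (hfb : ∀ a x, |f a x| ≤ 1)
    (A : Finset κ) :
    (∀ a ∈ A, 1 ≤ r a) → (∀ a ∈ A, c a ∈ J₀) →
    (∀ a ∈ A, ∀ b ∈ A, c a = c b → r a = r b → a = b) →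
    ∀ (n : ℕ) (Z : Ω → ℝ), StronglyMeasurable[Fn X J₀ n] Z → (∀ᵐ ω ∂P, |Z ω| ≤ 1) →
    |(∫ ω, Z ω * ∏ a ∈ A, f a (X (r a + n) (c a) ω) ∂P)
      - ∫ ω, Z ω * ∏ a ∈ A, Mart X J₀ P (f a) (c a) n ω ∂P|
      ≤ ∑ a ∈ A, eps X J₀ P (f a) (c a) n := by
  classical
  induction A using Finset.strongInduction with
  | _ A ih =>
  intro hr1 hcJ hinj n Z hZ hZb
  rcases A.eq_empty_or_nonempty with rfl | hA
  · simp
  obtain ⟨a₀, ha₀A, hmax⟩ := A.exists_max_image r hA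
  set j₀ := c a₀ with hj₀
  have hj₀J : j₀ ∈ J₀ := hcJ a₀ ha₀A
  set N := r a₀ + n with hNdef
  have hnN : n < N := by have := hr1 a₀ ha₀A; omega
  set A' := A.erase a₀ with hA'
  have hsub : A' ⊂ A := Finset.erase_ssubset ha₀A
  set W : Ω → ℝ := fun ω => Z ω * ∏ a ∈ A', f a (X (r a + n) (c a) ω) with hWdef
  -- measurability of W with respect to `Gn N j₀`
  have hWmeasG : Measurable[Gn X J₀ N j₀] W := by
    refine Measurable.mul ?_ ?_
    · exact (hZ.measurable.mono (Fn_le_Gn hnN j₀) le_rfl)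
    · refine Finset.measurable_prod _ fun a haA' => ?_
      have haA : a ∈ A := Finset.mem_of_mem_erase haA'
      have hle : r a ≤ r a₀ := hmax a haA
      rcases lt_or_eq_of_le hle with hlt | heq
      · exact (hf a).comp (meas_Gn_coord_lt (by omega : r a + n < N) (hcJ a haA) j₀)
      · have hcne : c a ≠ j₀ := by
          intro hceq
          exact (Finset.ne_of_mem_erase haA') (hinj a haA a₀ ha₀A hceq heq)
        have : r a + n = N := by omega
        rw [this]
        exact (hf a).comp (meas_Gn_coord_eq (hcJ a haA) hcne)
  have hWsmG : StronglyMeasurable[Gn X J₀ N j₀] W := hWmeasG.stronglyMeasurable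
  have hWb : ∀ᵐ ω ∂P, |W ω| ≤ 1 := by
    filter_upwards [hZb] with ω hω
    rw [hWdef]
    have hprod : |∏ a ∈ A', f a (X (r a + n) (c a) ω)| ≤ 1 := by
      rw [Finset.abs_prod]
      refine Finset.prod_le_one (fun a _ => abs_nonneg _) (fun a _ => hfb a _)
    calc |Z ω * ∏ a ∈ A', f a (X (r a + n) (c a) ω)|
        = |Z ω| * |∏ a ∈ A', f a (X (r a + n) (c a) ω)| := abs_mul _ _
      _ ≤ 1 := mul_le_one₀ hω (abs_nonneg _) hprod
  -- split the product
  have hsplit : ∫ ω, Z ω * ∏ a ∈ A, f a (X (r a + n) (c a) ω) ∂P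
      = ∫ ω, W ω * f a₀ (X N j₀ ω) ∂P := by
    refine integral_congr_ae (Eventually.of_forall fun ω => ?_)
    simp only [hWdef, hA']
    rw [← Finset.mul_prod_erase A (fun a => f a (X (r a + n) (c a) ω)) ha₀A]
    ring
  -- apply the pcid property and pass to the prediction at time N, then at time n
  have hstep1 : ∫ ω, W ω * f a₀ (X N j₀ ω) ∂P = ∫ ω, W ω * f a₀ (X (N+1) j₀ ω) ∂P :=
    pcid_key P hX hj₀J (hf a₀) (hfb a₀) N (hpcid J₀ j₀ hj₀J N) hWsmG hWb
  have hint_fN : Integrable (fun ω => f a₀ (X (N+1) j₀ ω)) P :=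
    integrable_of_bdd (((hf a₀).comp (hX (N+1) j₀)).aestronglyMeasurable)
      (Eventually.of_forall fun ω => hfb _ _)
  have hWsmF : StronglyMeasurable[Fn X J₀ N] W := hWsmG.mono (Gn_le_Fn N j₀)
  have hstep2 : ∫ ω, W ω * f a₀ (X (N+1) j₀ ω) ∂P
      = ∫ ω, W ω * Mart X J₀ P (f a₀) j₀ N ω ∂P :=
    (integral_mul_condexp P (Fn_le hX N) hWsmF hWb hint_fN).symm
  -- replace `Mart … N` by `Mart … n`
  have hMN := Mart_bdd X J₀ P hX (hfb a₀) j₀ N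
  have hMn := Mart_bdd X J₀ P hX (hfb a₀) j₀ n
  have hMNsm : AEStronglyMeasurable (Mart X J₀ P (f a₀) j₀ N) P :=
    ((Mart_sm X J₀ P (f a₀) j₀ N).mono (Fn_le hX N)).aestronglyMeasurable
  have hMnsm : AEStronglyMeasurable (Mart X J₀ P (f a₀) j₀ n) P :=
    ((Mart_sm X J₀ P (f a₀) j₀ n).mono (Fn_le hX n)).aestronglyMeasurable
  have hWb' : AEStronglyMeasurable W P := (hWsmF.mono (Fn_le hX N)).aestronglyMeasurable
  have hintWN : Integrable (fun ω => W ω * Mart X J₀ P (f a₀) j₀ N ω) P := by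
    refine integrable_of_bdd (C := 1) (hWb'.mul hMNsm) ?_
    filter_upwards [hWb, hMN] with ω h1 h2
    rw [abs_mul]
    exact mul_le_one₀ h1 (abs_nonneg _) h2
  have hintWn : Integrable (fun ω => W ω * Mart X J₀ P (f a₀) j₀ n ω) P := by
    refine integrable_of_bdd (C := 1) (hWb'.mul hMnsm) ?_
    filter_upwards [hWb, hMn] with ω h1 h2
    rw [abs_mul]
    exact mul_le_one₀ h1 (abs_nonneg _) h2
  have habs_d_sm : AEStronglyMeasurable
      (fun ω => |Mart X J₀ P (f a₀) j₀ N ω - Mart X J₀ P (f a₀) j₀ n ω|) P := by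
    have := (hMNsm.sub hMnsm).norm
    simpa [Real.norm_eq_abs] using this
  have hintdiff : Integrable
      (fun ω => |Mart X J₀ P (f a₀) j₀ N ω - Mart X J₀ P (f a₀) j₀ n ω|) P := by
    refine integrable_of_bdd (C := 2) habs_d_sm ?_
    filter_upwards [hMN, hMn] with ω h1 h2
    rw [abs_abs]
    calc |Mart X J₀ P (f a₀) j₀ N ω - Mart X J₀ P (f a₀) j₀ n ω|
        ≤ |Mart X J₀ P (f a₀) j₀ N ω| + |Mart X J₀ P (f a₀) j₀ n ω| := abs_sub _ _
      _ ≤ 2 := by linarith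
  have hintWdiff : Integrable
      (fun ω => W ω * (Mart X J₀ P (f a₀) j₀ N ω - Mart X J₀ P (f a₀) j₀ n ω)) P := by
    refine integrable_of_bdd (C := 2) (hWb'.mul (hMNsm.sub hMnsm)) ?_
    filter_upwards [hWb, hMN, hMn] with ω h0 h1 h2
    rw [abs_mul]
    calc |W ω| * |Mart X J₀ P (f a₀) j₀ N ω - Mart X J₀ P (f a₀) j₀ n ω|
        ≤ 1 * 2 := by
          refine mul_le_mul h0 ?_ (abs_nonneg _) (by norm_num)
          calc |Mart X J₀ P (f a₀) j₀ N ω - Mart X J₀ P (f a₀) j₀ n ω|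
              ≤ |Mart X J₀ P (f a₀) j₀ N ω| + |Mart X J₀ P (f a₀) j₀ n ω| := abs_sub _ _
            _ ≤ 2 := by linarith
      _ = 2 := by norm_num
  have hstep3 : |(∫ ω, W ω * Mart X J₀ P (f a₀) j₀ N ω ∂P)
      - ∫ ω, W ω * Mart X J₀ P (f a₀) j₀ n ω ∂P| ≤ eps X J₀ P (f a₀) j₀ n := by
    have hdiffeq : (∫ ω, W ω * Mart X J₀ P (f a₀) j₀ N ω ∂P)
        - ∫ ω, W ω * Mart X J₀ P (f a₀) j₀ n ω ∂P
        = ∫ ω, W ω * (Mart X J₀ P (f a₀) j₀ N ω - Mart X J₀ P (f a₀) j₀ n ω) ∂P := by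
      rw [← integral_sub hintWN hintWn]
      refine integral_congr_ae (Eventually.of_forall fun ω => ?_)
      ring
    rw [hdiffeq]
    have habs : |∫ ω, W ω * (Mart X J₀ P (f a₀) j₀ N ω - Mart X J₀ P (f a₀) j₀ n ω) ∂P|
        ≤ ∫ ω, |Mart X J₀ P (f a₀) j₀ N ω - Mart X J₀ P (f a₀) j₀ n ω| ∂P := by
      have hnorm := norm_integral_le_integral_norm (μ := P)
        (fun ω => W ω * (Mart X J₀ P (f a₀) j₀ N ω - Mart X J₀ P (f a₀) j₀ n ω))
      simp only [Real.norm_eq_abs] at hnorm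
      refine le_trans hnorm ?_
      refine integral_mono_ae hintWdiff.abs hintdiff ?_
      filter_upwards [hWb] with ω h0
      rw [abs_mul]
      refine mul_le_of_le_one_left (abs_nonneg _) h0
    exact habs.trans (Mart_L1_le_eps P hX hpcid hj₀J (hf a₀) (hfb a₀) (by omega : n ≤ N))
  -- regroup and apply the induction hypothesis
  have hZM : StronglyMeasurable[Fn X J₀ n] (fun ω => Z ω * Mart X J₀ P (f a₀) j₀ n ω) :=
    hZ.mul (Mart_sm X J₀ P (f a₀) j₀ n)
  have hZMb : ∀ᵐ ω ∂P, |Z ω * Mart X J₀ P (f a₀) j₀ n ω| ≤ 1 := by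
    filter_upwards [hZb, hMn] with ω h1 h2
    rw [abs_mul]
    exact mul_le_one₀ h1 (abs_nonneg _) h2
  have hregroup : ∫ ω, W ω * Mart X J₀ P (f a₀) j₀ n ω ∂P
      = ∫ ω, (Z ω * Mart X J₀ P (f a₀) j₀ n ω) * ∏ a ∈ A', f a (X (r a + n) (c a) ω) ∂P := by
    refine integral_congr_ae (Eventually.of_forall fun ω => ?_)
    simp only [hWdef]
    ring
  have hIH := ih A' hsub (fun a ha => hr1 a (Finset.mem_of_mem_erase ha))
    (fun a ha => hcJ a (Finset.mem_of_mem_erase ha))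
    (fun a ha b hb hc hr => hinj a (Finset.mem_of_mem_erase ha) b (Finset.mem_of_mem_erase hb) hc hr)
    n (fun ω => Z ω * Mart X J₀ P (f a₀) j₀ n ω) hZM hZMb
  have hfinal : ∫ ω, (Z ω * Mart X J₀ P (f a₀) j₀ n ω) * ∏ a ∈ A', Mart X J₀ P (f a) (c a) n ω ∂P
      = ∫ ω, Z ω * ∏ a ∈ A, Mart X J₀ P (f a) (c a) n ω ∂P := by
    refine integral_congr_ae (Eventually.of_forall fun ω => ?_)
    simp only [hA']
    rw [← Finset.mul_prod_erase A (fun a => Mart X J₀ P (f a) (c a) n ω) ha₀A]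
    ring
  -- combine everything
  have hsum : ∑ a ∈ A, eps X J₀ P (f a) (c a) n
      = eps X J₀ P (f a₀) j₀ n + ∑ a ∈ A', eps X J₀ P (f a) (c a) n :=
    (Finset.add_sum_erase A _ ha₀A).symm
  rw [hsplit, hstep1, hstep2, hsum]
  calc |(∫ ω, W ω * Mart X J₀ P (f a₀) j₀ N ω ∂P)
      - ∫ ω, Z ω * ∏ a ∈ A, Mart X J₀ P (f a) (c a) n ω ∂P|
      ≤ |(∫ ω, W ω * Mart X J₀ P (f a₀) j₀ N ω ∂P)
          - ∫ ω, W ω * Mart X J₀ P (f a₀) j₀ n ω ∂P|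
        + |(∫ ω, W ω * Mart X J₀ P (f a₀) j₀ n ω ∂P)
          - ∫ ω, Z ω * ∏ a ∈ A, Mart X J₀ P (f a) (c a) n ω ∂P| :=
        abs_sub_le _ _ _
    _ ≤ eps X J₀ P (f a₀) j₀ n + ∑ a ∈ A', eps X J₀ P (f a) (c a) n := by
        refine add_le_add hstep3 ?_
        rw [hregroup, ← hfinal]
        exact hIH

/-- Expectations of products only depend on the column structure, not on the
(within-column injective) row assignment. -/
lemma prod_eq (hX : ∀ n i, Measurable (X n i))
    (hstat : Measure.map (fun ω => fun p : ℕ × I => X (p.1 + 1) p.2 ω) P =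
      Measure.map (fun ω => fun p : ℕ × I => X p.1 p.2 ω) P)
    (hpcid : PcidHyp X P) {κ : Type*} [Fintype κ] (r₁ r₂ : κ → ℕ) (c : κ → I)
    (f : κ → E → ℝ) (hf : ∀ a, Measurable (f a)) (hfb : ∀ a x, |f a x| ≤ 1)
    (hinj₁ : ∀ a b, c a = c b → r₁ a = r₁ b → a = b)
    (hinj₂ : ∀ a b, c a = c b → r₂ a = r₂ b → a = b) :
    ∫ ω, ∏ a, f a (X (r₁ a) (c a) ω) ∂P = ∫ ω, ∏ a, f a (X (r₂ a) (c a) ω) ∂P := by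
  classical
  set J₀ : Finset I := Finset.image c Finset.univ with hJ₀
  have hcJ : ∀ a, c a ∈ J₀ := fun a => Finset.mem_image_of_mem c (Finset.mem_univ a)
  have key : ∀ (r : κ → ℕ), (∀ a b, c a = c b → r a = r b → a = b) → ∀ n : ℕ,
      |(∫ ω, ∏ a, f a (X (r a) (c a) ω) ∂P)
        - ∫ ω, ∏ a, Mart X J₀ P (f a) (c a) n ω ∂P|
        ≤ ∑ a, eps X J₀ P (f a) (c a) n := by
    intro r hinj n
    have hshift1 : ∫ ω, ∏ a, f a (X (r a + 1) (c a) ω) ∂P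
        = ∫ ω, ∏ a, f a (X (r a) (c a) ω) ∂P :=
      stat_prod P hX hstat r c f hf 1
    have hshiftn : ∫ ω, ∏ a, f a (X ((r a + 1) + n) (c a) ω) ∂P
        = ∫ ω, ∏ a, f a (X (r a + 1) (c a) ω) ∂P :=
      stat_prod P hX hstat (fun a => r a + 1) c f hf n
    have h2 := main_est (J₀ := J₀) P hX hpcid (fun a => r a + 1) c f hf hfb Finset.univ
      (fun a _ => show 1 ≤ r a + 1 by omega) (fun a _ => hcJ a)
      (fun a _ b _ hc hr => hinj a b hc
        (Nat.add_right_cancel (show r a + 1 = r b + 1 from hr)))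
      n (fun _ => (1:ℝ)) stronglyMeasurable_const
      (Eventually.of_forall (fun ω => by norm_num))
    simp only [one_mul] at h2
    rw [← hshift1, ← hshiftn]
    exact h2
  have htends : Tendsto (fun n => (∑ a, eps X J₀ P (f a) (c a) n)
      + ∑ a, eps X J₀ P (f a) (c a) n) atTop (𝓝 0) := by
    have h0 : Tendsto (fun n => ∑ a : κ, eps X J₀ P (f a) (c a) n) atTop (𝓝 0) := by
      have := tendsto_finset_sum (Finset.univ : Finset κ)
        (fun a _ => eps_tendsto (J₀ := J₀) P hX hpcid (hcJ a) (hf a) (hfb a))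
      simpa using this
    simpa using h0.add h0
  have hDle : ∀ n : ℕ, |(∫ ω, ∏ a, f a (X (r₁ a) (c a) ω) ∂P)
      - ∫ ω, ∏ a, f a (X (r₂ a) (c a) ω) ∂P|
      ≤ (∑ a, eps X J₀ P (f a) (c a) n) + ∑ a, eps X J₀ P (f a) (c a) n := by
    intro n
    have k1 := key r₁ hinj₁ n
    have k2 := key r₂ hinj₂ n
    calc |(∫ ω, ∏ a, f a (X (r₁ a) (c a) ω) ∂P)
        - ∫ ω, ∏ a, f a (X (r₂ a) (c a) ω) ∂P|
        ≤ |(∫ ω, ∏ a, f a (X (r₁ a) (c a) ω) ∂P)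
            - ∫ ω, ∏ a, Mart X J₀ P (f a) (c a) n ω ∂P|
          + |(∫ ω, ∏ a, Mart X J₀ P (f a) (c a) n ω ∂P)
            - ∫ ω, ∏ a, f a (X (r₂ a) (c a) ω) ∂P| := abs_sub_le _ _ _
      _ ≤ (∑ a, eps X J₀ P (f a) (c a) n) + ∑ a, eps X J₀ P (f a) (c a) n := by
          refine add_le_add k1 ?_
          rw [abs_sub_comm]
          exact k2
  have habs : |(∫ ω, ∏ a, f a (X (r₁ a) (c a) ω) ∂P)
      - ∫ ω, ∏ a, f a (X (r₂ a) (c a) ω) ∂P| ≤ 0 :=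
    ge_of_tendsto htends (Eventually.of_forall hDle)
  have := abs_nonpos_iff.mp habs
  linarith [sub_eq_zero.mp this]

/-- Finite-dimensional distributions only depend on the columns, not the
(within-column injective) row assignments. -/
lemma map_eq (hX : ∀ n i, Measurable (X n i))
    (hstat : Measure.map (fun ω => fun p : ℕ × I => X (p.1 + 1) p.2 ω) P =
      Measure.map (fun ω => fun p : ℕ × I => X p.1 p.2 ω) P)
    (hpcid : PcidHyp X P) {κ : Type*} [Fintype κ] (r₁ r₂ : κ → ℕ) (c : κ → I)
    (hinj₁ : ∀ a b, c a = c b → r₁ a = r₁ b → a = b)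
    (hinj₂ : ∀ a b, c a = c b → r₂ a = r₂ b → a = b) :
    Measure.map (fun ω => fun a : κ => X (r₁ a) (c a) ω) P
      = Measure.map (fun ω => fun a : κ => X (r₂ a) (c a) ω) P := by
  classical
  have hm : ∀ r : κ → ℕ, Measurable (fun ω => fun a : κ => X (r a) (c a) ω) :=
    fun r => measurable_pi_lambda _ fun a => hX _ _
  haveI h₁ : IsProbabilityMeasure (Measure.map (fun ω => fun a : κ => X (r₁ a) (c a) ω) P) :=
    Measure.isProbabilityMeasure_map (hm r₁).aemeasurable
  haveI h₂ : IsProbabilityMeasure (Measure.map (fun ω => fun a : κ => X (r₂ a) (c a) ω) P) :=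
    Measure.isProbabilityMeasure_map (hm r₂).aemeasurable
  refine ext_of_generate_finite
    (Set.pi Set.univ '' Set.pi Set.univ fun _ : κ => { s : Set E | MeasurableSet s })
    generateFrom_pi.symm isPiSystem_pi ?_ (by simp [measure_univ])
  rintro _ ⟨A, hA, rfl⟩
  have hAm : ∀ a, MeasurableSet (A a) := fun a => hA a (Set.mem_univ a)
  have hpi : MeasurableSet (Set.pi Set.univ A) := MeasurableSet.univ_pi hAm
  rw [Measure.map_apply (hm r₁) hpi, Measure.map_apply (hm r₂) hpi]
  have hind : ∀ r : κ → ℕ,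
      (P ((fun ω => fun a : κ => X (r a) (c a) ω) ⁻¹' Set.pi Set.univ A)).toReal
        = ∫ ω, ∏ a, (A a).indicator (fun _ => (1:ℝ)) (X (r a) (c a) ω) ∂P := by
    intro r
    rw [← measureReal_def, ← integral_indicator_one ((hm r) hpi)]
    refine integral_congr_ae (Eventually.of_forall fun ω => ?_)
    by_cases h : ∀ a, X (r a) (c a) ω ∈ A a
    · have hmem : ω ∈ (fun ω => fun a : κ => X (r a) (c a) ω) ⁻¹' Set.pi Set.univ A := by
        intro a _
        exact h a
      rw [Set.indicator_of_mem hmem]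
      simp only [Pi.one_apply]
      exact (Finset.prod_eq_one
        (fun a _ => Set.indicator_of_mem (h a) (fun _ => (1:ℝ)))).symm
    · push_neg at h
      obtain ⟨a, ha⟩ := h
      have hnmem : ω ∉ (fun ω => fun a : κ => X (r a) (c a) ω) ⁻¹' Set.pi Set.univ A := by
        intro hcon
        exact ha (hcon a (Set.mem_univ a))
      rw [Set.indicator_of_notMem hnmem]
      exact (Finset.prod_eq_zero (Finset.mem_univ a)
        (Set.indicator_of_notMem ha (fun _ => (1:ℝ)))).symm
  refine (ENNReal.toReal_eq_toReal_iff' (measure_ne_top _ _) (measure_ne_top _ _)).mp ?_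
  rw [hind r₁, hind r₂]
  exact prod_eq P hX hstat hpcid r₁ r₂ c _
    (fun a => measurable_const.indicator (hAm a))
    (fun a x => by
      by_cases hx : x ∈ A a
      · rw [Set.indicator_of_mem hx]; norm_num
      · rw [Set.indicator_of_notMem hx]; norm_num)
    hinj₁ hinj₂

end Main
end StationaryPcid

/-- A stationary process `(X_n^I)` which is partially c.i.d. in the distributional sense,
i.e. for every finite `J ⊆ I`, `j ∈ J` and `n ≥ 0`,
`(X_{1:n}^J, X_{n+1}^{J\{j}}, X_{n+1,j}) =_d (X_{1:n}^J, X_{n+1}^{J\{j}}, X_{n+2,j})`,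
is partially exchangeable.  (Indices are `0`-based: row `n` of the Lean array is the
`(n+1)`-st observation of the paper.) -/
theorem stationary_pcid_is_partially_exchangeable
    {Ω E I : Type*} {mΩ : MeasurableSpace Ω} [MeasurableSpace E]
    [TopologicalSpace E] [PolishSpace E] [BorelSpace E] [Countable I]
    (P : Measure Ω) [IsProbabilityMeasure P]
    (X : ℕ → I → Ω → E) (hX : ∀ n i, Measurable (X n i))
    (hstat : Measure.map (fun ω => fun p : ℕ × I => X (p.1 + 1) p.2 ω) P =
      Measure.map (fun ω => fun p : ℕ × I => X p.1 p.2 ω) P)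
    (hpcid : ∀ (J : Finset I) (j : I), j ∈ J → ∀ n : ℕ,
      Measure.map (fun ω =>
        ((fun q : Fin n × J => X q.1 (q.2 : I) ω),
         (fun i : {i : I // i ∈ J ∧ i ≠ j} => X n i.1 ω),
         X (n + 1) j ω)) P =
      Measure.map (fun ω =>
        ((fun q : Fin n × J => X q.1 (q.2 : I) ω),
         (fun i : {i : I // i ∈ J ∧ i ≠ j} => X n i.1 ω),
         X n j ω)) P)
    (π : I → Equiv.Perm ℕ) (hπ : ∀ i, ∃ N, ∀ n, N ≤ n → π i n = n) :
    Measure.map (fun ω => fun p : ℕ × I => X (π p.2 p.1) p.2 ω) P =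
      Measure.map (fun ω => fun p : ℕ × I => X p.1 p.2 ω) P := by
  classical
  have harrπ : Measurable (fun ω => fun p : ℕ × I => X (π p.2 p.1) p.2 ω) :=
    measurable_pi_lambda _ fun p => hX _ _
  have harr : Measurable (fun ω => fun p : ℕ × I => X p.1 p.2 ω) :=
    measurable_pi_lambda _ fun p => hX _ _
  haveI : IsProbabilityMeasure
      (Measure.map (fun ω => fun p : ℕ × I => X (π p.2 p.1) p.2 ω) P) :=
    Measure.isProbabilityMeasure_map harrπ.aemeasurable
  haveI : IsProbabilityMeasure
      (Measure.map (fun ω => fun p : ℕ × I => X p.1 p.2 ω) P) :=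
    Measure.isProbabilityMeasure_map harr.aemeasurable
  refine ext_of_generate_finite (measurableCylinders fun _ : ℕ × I => E)
    generateFrom_measurableCylinders.symm isPiSystem_measurableCylinders ?_
    (by simp [measure_univ])
  intro t ht
  obtain ⟨s, S, hS, rfl⟩ := (mem_measurableCylinders t).mp ht
  rw [Measure.map_apply harrπ hS.cylinder, Measure.map_apply harr hS.cylinder]
  have hmT₁ : Measurable (fun ω => fun a : ↥s => X (π (a : ℕ × I).2 (a : ℕ × I).1)
      (a : ℕ × I).2 ω) := measurable_pi_lambda _ fun a => hX _ _
  have hmT₂ : Measurable (fun ω => fun a : ↥s => X (a : ℕ × I).1 (a : ℕ × I).2 ω) :=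
    measurable_pi_lambda _ fun a => hX _ _
  have h1 : (fun ω => fun p : ℕ × I => X (π p.2 p.1) p.2 ω) ⁻¹' cylinder s S
      = (fun ω => fun a : ↥s => X (π (a : ℕ × I).2 (a : ℕ × I).1) (a : ℕ × I).2 ω) ⁻¹' S :=
    rfl
  have h2 : (fun ω => fun p : ℕ × I => X p.1 p.2 ω) ⁻¹' cylinder s S
      = (fun ω => fun a : ↥s => X (a : ℕ × I).1 (a : ℕ × I).2 ω) ⁻¹' S := rfl
  rw [h1, h2, ← Measure.map_apply hmT₁ hS, ← Measure.map_apply hmT₂ hS]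
  have hmapeq := StationaryPcid.map_eq P hX hstat hpcid
    (fun a : ↥s => π (a : ℕ × I).2 (a : ℕ × I).1)
    (fun a : ↥s => (a : ℕ × I).1)
    (fun a : ↥s => (a : ℕ × I).2)
    (fun a b hc hr => by
      have hc' : (a : ℕ × I).2 = (b : ℕ × I).2 := hc
      have hr' : π (a : ℕ × I).2 (a : ℕ × I).1 = π (b : ℕ × I).2 (b : ℕ × I).1 := hr
      apply Subtype.ext
      apply Prod.ext
      · rw [hc'] at hr'
        exact (π ((b : ℕ × I)).2).injective hr'
      · exact hc')
    (fun a b hc hr => Subtype.ext (Prod.ext hr hc))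
  rw [hmapeq]
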